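/- With δ_1 = ∂_x + x∂_y and δ_2 = ∂_y acting on the algebra A_{a,b} = K[x,y]/(x^k y^m : m > a or k + m > b), b ≥ 2a ≥ 2: for each 0 ≤ l ≤ a, the K-linear span of the operators {δ_1^{a+b−l−2s} δ_2^s : 0 ≤ s ≤ a} has dimension exactly l + 1, and the operators δ_1^{a+b−l−2s} δ_2^s for a − l ≤ s ≤ a form a basis of this span. -/

import Mathlib

open MvPolynomial

namespace Stmt11

noncomputable section

variable (K : Type*) [Field K] [CharZero K]

def mu (k m : ℕ) : MvPolynomial (Fin 2) K := X 0 ^ k * X 1 ^ m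

def Vsub (a b : ℕ) : Submodule K (MvPolynomial (Fin 2) K) :=
  Submodule.span K {p | ∃ k m : ℕ, m ≤ a ∧ k + m ≤ b ∧ p = mu K k m}

def d1p : MvPolynomial (Fin 2) K →ₗ[K] MvPolynomial (Fin 2) K :=
  (pderiv 0).toLinearMap + (LinearMap.mulLeft K (X 0)).comp (pderiv 1).toLinearMap

def d2p : MvPolynomial (Fin 2) K →ₗ[K] MvPolynomial (Fin 2) K :=
  (pderiv 1).toLinearMap

variable {K}

lemma mu_eq_monomial (k m : ℕ) :
    mu K k m = monomial (Finsupp.single 0 k + Finsupp.single 1 m) (1 : K) := by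
  rw [mu, X_pow_eq_monomial, X_pow_eq_monomial, monomial_mul, one_mul]

lemma single_add_apply0 (k m : ℕ) :
    (Finsupp.single (0 : Fin 2) k + Finsupp.single 1 m : Fin 2 →₀ ℕ) 0 = k := by
  simp [Finsupp.single_apply]

lemma single_add_apply1 (k m : ℕ) :
    (Finsupp.single (0 : Fin 2) k + Finsupp.single 1 m : Fin 2 →₀ ℕ) 1 = m := by
  simp [Finsupp.single_apply]

lemma coeff_eq_zero_of_mem {a b : ℕ} {I : Ideal (MvPolynomial (Fin 2) K)}
    (hI : I = Ideal.span {p | ∃ k m : ℕ, (a < m ∨ b < k + m) ∧ p = X 0 ^ k * X 1 ^ m})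
    {p : MvPolynomial (Fin 2) K} (hp : p ∈ I) :
    ∀ d : Fin 2 →₀ ℕ, d 1 ≤ a → d 0 + d 1 ≤ b → coeff d p = 0 := by
  subst hI
  induction hp using Submodule.span_induction with
  | mem x hx =>
    obtain ⟨k, m, hkm, rfl⟩ := hx
    intro d hd1 hd2
    rw [show (X 0 ^ k * X 1 ^ m : MvPolynomial (Fin 2) K)
        = mu K k m from rfl, mu_eq_monomial, coeff_monomial]
    split
    · next h =>
      exfalso
      have h0 : k = d 0 := by rw [← h, single_add_apply0]
      have h1 : m = d 1 := by rw [← h, single_add_apply1]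
      subst h0; subst h1
      rcases hkm with h' | h' <;> omega
    · rfl
  | zero => intro d _ _; simp
  | add x y _ _ hx hy =>
    intro d h1 h2
    rw [coeff_add, hx d h1 h2, hy d h1 h2, add_zero]
  | smul r x _ hx =>
    intro d h1 h2
    rw [smul_eq_mul, coeff_mul]
    apply Finset.sum_eq_zero
    intro uv huv
    have hsum := Finset.HasAntidiagonal.mem_antidiagonal.mp huv
    have hv1 : uv.2 1 ≤ d 1 := by
      rw [← hsum]; simp
    have hv0 : uv.2 0 + uv.2 1 ≤ d 0 + d 1 := by
      rw [← hsum]; simp; omega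
    rw [hx uv.2 (le_trans hv1 h1) (le_trans hv0 h2), mul_zero]

lemma mk_mu_eq_zero {a b : ℕ} {I : Ideal (MvPolynomial (Fin 2) K)}
    (hI : I = Ideal.span {p | ∃ k m : ℕ, (a < m ∨ b < k + m) ∧ p = X 0 ^ k * X 1 ^ m})
    {k m : ℕ} (h : a < m ∨ b < k + m) :
    Ideal.Quotient.mk I (mu K k m) = 0 := by
  rw [Ideal.Quotient.eq_zero_iff_mem, hI]
  exact Ideal.subset_span ⟨k, m, h, rfl⟩

lemma mk_mu_ne_zero {a b : ℕ} {I : Ideal (MvPolynomial (Fin 2) K)}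
    (hI : I = Ideal.span {p | ∃ k m : ℕ, (a < m ∨ b < k + m) ∧ p = X 0 ^ k * X 1 ^ m})
    {k m : ℕ} (h1 : m ≤ a) (h2 : k + m ≤ b) :
    Ideal.Quotient.mk I (mu K k m) ≠ 0 := by
  intro hc
  rw [Ideal.Quotient.eq_zero_iff_mem] at hc
  have := coeff_eq_zero_of_mem hI hc (Finsupp.single 0 k + Finsupp.single 1 m)
    (by rw [single_add_apply1]; exact h1)
    (by rw [single_add_apply0, single_add_apply1]; exact h2)
  rw [mu_eq_monomial, coeff_monomial, if_pos rfl] at this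
  exact one_ne_zero this


lemma d1p_apply (p : MvPolynomial (Fin 2) K) :
    d1p K p = pderiv 0 p + X 0 * pderiv 1 p := rfl

lemma d2p_apply (p : MvPolynomial (Fin 2) K) : d2p K p = pderiv 1 p := rfl

lemma pderiv0_mu (k m : ℕ) : pderiv 0 (mu K k m) = (k : K) • mu K (k-1) m := by
  simp only [mu, pderiv_mul, pderiv_pow, pderiv_X_self,
    pderiv_X_of_ne (show (1 : Fin 2) ≠ 0 by decide), Nat.cast_smul_eq_nsmul,
    nsmul_eq_mul, mul_zero, mul_one, add_zero]
  ring

lemma pderiv1_mu (k m : ℕ) : pderiv 1 (mu K k m) = (m : K) • mu K k (m-1) := by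
  simp only [mu, pderiv_mul, pderiv_pow, pderiv_X_self,
    pderiv_X_of_ne (show (0 : Fin 2) ≠ 1 by decide), Nat.cast_smul_eq_nsmul,
    nsmul_eq_mul, mul_zero, mul_one, zero_mul, zero_add, add_zero]
  ring

lemma d1p_mu (k m : ℕ) :
    d1p K (mu K k m) = (k : K) • mu K (k-1) m + (m : K) • mu K (k+1) (m-1) := by
  rw [d1p_apply, pderiv0_mu, pderiv1_mu]
  congr 1
  rw [mul_smul_comm]
  congr 1
  rw [mu, mu, pow_succ]
  ring

lemma d2p_mu (k m : ℕ) : d2p K (mu K k m) = (m : K) • mu K k (m-1) := by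
  rw [d2p_apply, pderiv1_mu]

lemma mu_mem_V {a b k m : ℕ} (h1 : m ≤ a) (h2 : k + m ≤ b) : mu K k m ∈ Vsub K a b :=
  Submodule.subset_span ⟨k, m, h1, h2, rfl⟩

lemma d1p_mu_mem_V {a b k m : ℕ} (h1 : m ≤ a) (h2 : k + m ≤ b) :
    d1p K (mu K k m) ∈ Vsub K a b := by
  rw [d1p_mu]
  apply Submodule.add_mem
  · rcases Nat.eq_zero_or_pos k with hk | hk
    · subst hk; simp
    · exact Submodule.smul_mem _ _ (mu_mem_V h1 (by omega))
  · rcases Nat.eq_zero_or_pos m with hm | hm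
    · subst hm; simp
    · exact Submodule.smul_mem _ _ (mu_mem_V (by omega) (by omega))

lemma d2p_mu_mem_V {a b k m : ℕ} (h1 : m ≤ a) (h2 : k + m ≤ b) :
    d2p K (mu K k m) ∈ Vsub K a b := by
  rw [d2p_mu]
  exact Submodule.smul_mem _ _ (mu_mem_V (by omega) (by omega))

lemma d1p_d2p_comm_mu (k m : ℕ) :
    d1p K (d2p K (mu K k m)) = d2p K (d1p K (mu K k m)) := by
  rw [d2p_mu, map_smul, d1p_mu, d1p_mu, map_add, map_smul, map_smul, d2p_mu, d2p_mu]
  rw [show m - 1 - 1 = m - 2 from rfl]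
  rcases Nat.eq_zero_or_pos m with hm | hm
  · subst hm; simp
  rcases Nat.eq_zero_or_pos (m-1) with hm1 | hm1
  · have : m = 1 := by omega
    subst this; simp
  have e1 : ((m - 1 : ℕ) : K) = (m : K) - 1 := by
    have : ((m - 1 : ℕ) : K) = ((m : ℕ) : K) - ((1:ℕ) : K) := Nat.cast_sub (by omega)
    simpa using this
  module


variable (K) in
def Qmk (I : Ideal (MvPolynomial (Fin 2) K)) :
    MvPolynomial (Fin 2) K →ₗ[K] (MvPolynomial (Fin 2) K ⧸ I) :=
  (Ideal.Quotient.mkₐ K I).toLinearMap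

lemma Qmk_apply {I : Ideal (MvPolynomial (Fin 2) K)} (p : MvPolynomial (Fin 2) K) :
    Qmk K I p = Ideal.Quotient.mk I p := rfl

variable {a b : ℕ} {I : Ideal (MvPolynomial (Fin 2) K)}
  {D1 D2 : Module.End K (MvPolynomial (Fin 2) K ⧸ I)}

section Transfer

variable (hD1 : ∀ k m : ℕ, m ≤ a → k + m ≤ b →
      D1 (Ideal.Quotient.mk I (X 0 ^ k * X 1 ^ m)) =
        Ideal.Quotient.mk I (pderiv 0 (X 0 ^ k * X 1 ^ m) + X 0 * pderiv 1 (X 0 ^ k * X 1 ^ m)))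
  (hD2 : ∀ k m : ℕ, m ≤ a → k + m ≤ b →
      D2 (Ideal.Quotient.mk I (X 0 ^ k * X 1 ^ m)) =
        Ideal.Quotient.mk I (pderiv 1 (X 0 ^ k * X 1 ^ m)))

lemma mem_V_d1p : ∀ p ∈ Vsub K a b, d1p K p ∈ Vsub K a b := by
  intro p hp
  induction hp using Submodule.span_induction with
  | mem x hx => obtain ⟨k, m, h1, h2, rfl⟩ := hx; exact d1p_mu_mem_V h1 h2
  | zero => rw [map_zero]; exact Submodule.zero_mem _
  | add x y _ _ hx hy => rw [map_add]; exact Submodule.add_mem _ hx hy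
  | smul c x _ hx => rw [map_smul]; exact Submodule.smul_mem _ _ hx

lemma mem_V_d2p : ∀ p ∈ Vsub K a b, d2p K p ∈ Vsub K a b := by
  intro p hp
  induction hp using Submodule.span_induction with
  | mem x hx => obtain ⟨k, m, h1, h2, rfl⟩ := hx; exact d2p_mu_mem_V h1 h2
  | zero => rw [map_zero]; exact Submodule.zero_mem _
  | add x y _ _ hx hy => rw [map_add]; exact Submodule.add_mem _ hx hy
  | smul c x _ hx => rw [map_smul]; exact Submodule.smul_mem _ _ hx

include hD1 in
lemma D1_mk : ∀ p ∈ Vsub K a b, D1 (Qmk K I p) = Qmk K I (d1p K p) := by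
  intro p hp
  induction hp using Submodule.span_induction with
  | mem x hx =>
    obtain ⟨k, m, h1, h2, rfl⟩ := hx
    rw [d1p_apply]
    exact hD1 k m h1 h2
  | zero => simp
  | add x y _ _ hx hy => rw [map_add, map_add, hx, hy, map_add, map_add]
  | smul c x _ hx => rw [map_smul, map_smul, hx, map_smul, map_smul]

include hD2 in
lemma D2_mk : ∀ p ∈ Vsub K a b, D2 (Qmk K I p) = Qmk K I (d2p K p) := by
  intro p hp
  induction hp using Submodule.span_induction with
  | mem x hx =>
    obtain ⟨k, m, h1, h2, rfl⟩ := hx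
    rw [d2p_apply]
    exact hD2 k m h1 h2
  | zero => simp
  | add x y _ _ hx hy => rw [map_add, map_add, hx, hy, map_add, map_add]
  | smul c x _ hx => rw [map_smul, map_smul, hx, map_smul, map_smul]

include hD1 in
lemma D1_pow_mk : ∀ (n : ℕ), ∀ p ∈ Vsub K a b,
    (D1 ^ n) (Qmk K I p) = Qmk K I (((d1p K) ^ n) p) ∧ ((d1p K) ^ n) p ∈ Vsub K a b := by
  intro n
  induction n with
  | zero => intro p hp; simpa using hp
  | succ n ih =>
    intro p hp
    obtain ⟨h1, h2⟩ := ih p hp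
    rw [pow_succ', pow_succ']
    constructor
    · rw [Module.End.mul_apply, Module.End.mul_apply, h1, D1_mk hD1 _ h2]
    · rw [Module.End.mul_apply]
      exact mem_V_d1p _ h2

include hD2 in
lemma D2_pow_mk : ∀ (n : ℕ), ∀ p ∈ Vsub K a b,
    (D2 ^ n) (Qmk K I p) = Qmk K I (((d2p K) ^ n) p) ∧ ((d2p K) ^ n) p ∈ Vsub K a b := by
  intro n
  induction n with
  | zero => intro p hp; simpa using hp
  | succ n ih =>
    intro p hp
    obtain ⟨h1, h2⟩ := ih p hp
    rw [pow_succ', pow_succ']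
    constructor
    · rw [Module.End.mul_apply, Module.End.mul_apply, h1, D2_mk hD2 _ h2]
    · rw [Module.End.mul_apply]
      exact mem_V_d2p _ h2

end Transfer

lemma span_q_top (hI : I = Ideal.span {p | ∃ k m : ℕ, (a < m ∨ b < k + m) ∧ p = X 0 ^ k * X 1 ^ m}) :
    Submodule.span K {x : MvPolynomial (Fin 2) K ⧸ I |
      ∃ k m : ℕ, m ≤ a ∧ k + m ≤ b ∧ x = Ideal.Quotient.mk I (mu K k m)} = ⊤ := by
  rw [eq_top_iff]
  rintro z -
  obtain ⟨p, rfl⟩ := Ideal.Quotient.mk_surjective (I := I) z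
  rw [show (Ideal.Quotient.mk I p : MvPolynomial (Fin 2) K ⧸ I) = Qmk K I p from rfl]
  rw [as_sum p, map_sum]
  apply Submodule.sum_mem
  intro v hv
  have hv2 : v = Finsupp.single 0 (v 0) + Finsupp.single 1 (v 1) := by
    ext i
    fin_cases i
    · exact (single_add_apply0 (v 0) (v 1)).symm
    · exact (single_add_apply1 (v 0) (v 1)).symm
  have hsingle : monomial v (coeff v p) = (coeff v p) • mu K (v 0) (v 1) := by
    rw [mu_eq_monomial, smul_monomial, smul_eq_mul, mul_one, ← hv2]
  rw [hsingle, map_smul]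
  apply Submodule.smul_mem
  by_cases hreg : v 1 ≤ a ∧ v 0 + v 1 ≤ b
  · exact Submodule.subset_span ⟨v 0, v 1, hreg.1, hreg.2, rfl⟩
  · rw [Qmk_apply, mk_mu_eq_zero hI (by omega)]
    exact Submodule.zero_mem _


section Comm

lemma D_comm
    (hI : I = Ideal.span {p | ∃ k m : ℕ, (a < m ∨ b < k + m) ∧ p = X 0 ^ k * X 1 ^ m})
    (hD1 : ∀ k m : ℕ, m ≤ a → k + m ≤ b →
      D1 (Ideal.Quotient.mk I (X 0 ^ k * X 1 ^ m)) =
        Ideal.Quotient.mk I (pderiv 0 (X 0 ^ k * X 1 ^ m) + X 0 * pderiv 1 (X 0 ^ k * X 1 ^ m)))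
    (hD2 : ∀ k m : ℕ, m ≤ a → k + m ≤ b →
      D2 (Ideal.Quotient.mk I (X 0 ^ k * X 1 ^ m)) =
        Ideal.Quotient.mk I (pderiv 1 (X 0 ^ k * X 1 ^ m))) :
    D1 * D2 = D2 * D1 := by
  apply LinearMap.ext_on (span_q_top hI)
  rintro x ⟨k, m, h1, h2, rfl⟩
  rw [← Qmk_apply, Module.End.mul_apply, Module.End.mul_apply,
    D2_mk hD2 _ (mu_mem_V h1 h2), D1_mk hD1 _ (mem_V_d2p _ (mu_mem_V h1 h2)),
    D1_mk hD1 _ (mu_mem_V h1 h2), D2_mk hD2 _ (mem_V_d1p _ (mu_mem_V h1 h2))]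
  exact congrArg _ (d1p_d2p_comm_mu k m)

end Comm

def TT {M : Type*} [Ring M] (D1 D2 : M) : ℕ → M
  | 0 => 1
  | 1 => D1
  | n+2 => D1 * TT D1 D2 (n+1) - (n+1 : ℕ) • (D2 * TT D1 D2 n)

lemma TT_zero {M : Type*} [Ring M] (D1 D2 : M) : TT D1 D2 0 = 1 := rfl
lemma TT_one {M : Type*} [Ring M] (D1 D2 : M) : TT D1 D2 1 = D1 := rfl
lemma TT_two {M : Type*} [Ring M] (D1 D2 : M) (n : ℕ) :
    TT D1 D2 (n+2) = D1 * TT D1 D2 (n+1) - (n+1 : ℕ) • (D2 * TT D1 D2 n) := rfl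

variable (K) in
def GG (k m n : ℕ) : MvPolynomial (Fin 2) K :=
  ∑ i ∈ Finset.range (n+1),
    ((n.factorial * k.choose i * m.choose (n-i) : ℕ) : K) • mu K (k + (n-i) - i) (m - (n-i))

lemma GG_zero (k m : ℕ) : GG K k m 0 = mu K k m := by
  simp [GG]

lemma GG_one (k m : ℕ) : GG K k m 1 = d1p K (mu K k m) := by
  rw [GG, Finset.sum_range_succ, Finset.sum_range_one, d1p_mu]
  simp [Nat.choose_one_right]
  rw [add_comm]

lemma GG_eq_zero {k m n : ℕ} (h : k + m < n) : GG K k m n = 0 := by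
  apply Finset.sum_eq_zero
  intro i _
  by_cases hik : i ≤ k
  · rw [Nat.choose_eq_zero_of_lt (show m < n - i by omega), Nat.mul_zero]
    simp
  · rw [Nat.choose_eq_zero_of_lt (show k < i by omega), Nat.mul_zero, Nat.zero_mul]
    simp

lemma GG_mem_V {k m : ℕ} (h1 : m ≤ a) (h2 : k + m ≤ b) (n : ℕ) :
    GG K k m n ∈ Vsub K a b := by
  apply Submodule.sum_mem
  intro i _
  by_cases hik : i ≤ k
  · by_cases hmi : n - i ≤ m
    · exact Submodule.smul_mem _ _ (mu_mem_V (by omega) (by omega))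
    · rw [Nat.choose_eq_zero_of_lt (show m < n - i by omega), Nat.mul_zero]
      simp
  · rw [Nat.choose_eq_zero_of_lt (show k < i by omega), Nat.mul_zero, Nat.zero_mul]
    simp

variable (K) in
def tA (k m n i : ℕ) : MvPolynomial (Fin 2) K :=
  (((n+1).factorial * k.choose i * m.choose (n+1-i) * (k + (n+1-i) - i) : ℕ) : K) •
    mu K (k + (n+1-i) - i - 1) (m - (n+1-i))

variable (K) in
def tB (k m n i : ℕ) : MvPolynomial (Fin 2) K :=
  (((n+1).factorial * k.choose i * m.choose (n+1-i) * (m - (n+1-i)) : ℕ) : K) •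
    mu K (k + (n+1-i) - i + 1) (m - (n+1-i) - 1)

variable (K) in
def tC (k m n i : ℕ) : MvPolynomial (Fin 2) K :=
  (((n+1) * (n.factorial * k.choose i * m.choose (n-i)) * (m - (n-i)) : ℕ) : K) •
    mu K (k + (n-i) - i) (m - (n-i) - 1)

variable (K) in
def tT (k m n j : ℕ) : MvPolynomial (Fin 2) K :=
  (((n+2).factorial * k.choose j * m.choose (n+2-j) : ℕ) : K) •
    mu K (k + (n+2-j) - j) (m - (n+2-j))

lemma expand_d1p_GG (k m n : ℕ) :
    d1p K (GG K k m (n+1)) = ∑ i ∈ Finset.range (n+2), (tA K k m n i + tB K k m n i) := by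
  rw [GG, map_sum]
  apply Finset.sum_congr rfl
  intro i _
  rw [map_smul, d1p_mu, smul_add, smul_smul, smul_smul, tA, tB]
  push_cast
  ring_nf

lemma expand_d2p_GG (k m n : ℕ) :
    ((n+1 : ℕ) : K) • d2p K (GG K k m n) = ∑ i ∈ Finset.range (n+1), tC K k m n i := by
  rw [GG, map_sum, Finset.smul_sum]
  apply Finset.sum_congr rfl
  intro i _
  rw [map_smul, d2p_mu, smul_smul, smul_smul, tC]
  push_cast
  ring_nf

lemma GG_as_tT (k m n : ℕ) :
    GG K k m (n+2) = ∑ j ∈ Finset.range (n+3), tT K k m n j := rfl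

lemma key3 (k m n : ℕ) : tT K k m n 0 = tB K k m n 0 := by
  rw [tT, tB]
  simp only [Nat.sub_zero]
  have he : k + (n+2) = k + (n+1) + 1 := by omega
  have hf : m - (n+2) = m - (n+1) - 1 := by omega
  rw [he, hf]
  congr 2
  have h := Nat.choose_succ_right_eq m (n+1)
  rw [show (n+1)+1 = n+2 from rfl] at h
  rw [show (n+2).factorial = (n+2) * (n+1).factorial from Nat.factorial_succ (n+1),
    mul_assoc ((n+1).factorial * k.choose 0), ← h]
  ring

lemma key2 (k m n : ℕ) : tT K k m n (n+2) = tA K k m n (n+1) := by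
  rw [tT, tA]
  have g2 : n+2-(n+2) = 0 := by omega
  have g1 : n+1-(n+1) = 0 := by omega
  rw [g1, g2]
  have he : k + 0 - (n+2) = k + 0 - (n+1) - 1 := by omega
  rw [he]
  congr 2
  have h := Nat.choose_succ_right_eq k (n+1)
  rw [show (n+1)+1 = n+2 from rfl] at h
  have hx : k + 0 - (n+1) = k - (n+1) := by omega
  rw [hx, show (n+2).factorial = (n+2) * (n+1).factorial from Nat.factorial_succ (n+1)]
  have : (n+1).factorial * k.choose (n+1) * m.choose 0 * (k - (n+1))
      = (n+1).factorial * m.choose 0 * (k.choose (n+1) * (k - (n+1))) := by ring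
  rw [this, ← h]
  ring

lemma key1 (k m n i : ℕ) (hi : i ≤ n) :
    tT K k m n (i+1) = tA K k m n i + tB K k m n (i+1) - tC K k m n i := by
  by_cases hm : n+1-i ≤ m
  · -- y-live case
    by_cases hk : i + 1 ≤ k
    · -- fully live
      -- rewrite all monomials to a common one
      have e1 : k + (n+2-(i+1)) - (i+1) = k + (n+1-i) - i - 1 := by omega
      have e2 : k + (n+1-(i+1)) - (i+1) + 1 = k + (n+1-i) - i - 1 := by omega
      have e3 : k + (n-i) - i = k + (n+1-i) - i - 1 := by omega
      have f1 : m - (n+2-(i+1)) = m - (n+1-i) := by omega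
      have f2 : m - (n+1-(i+1)) - 1 = m - (n+1-i) := by omega
      have f3 : m - (n-i) - 1 = m - (n+1-i) := by omega
      rw [tT, tA, tB, tC, e1, e2, e3, f1, f2, f3]
      rw [← add_smul, ← sub_smul]
      congr 1
      -- now a scalar identity in K
      have hI1 : ((m.choose (n+1-i) * (n+1-i) : ℕ) : K)
          = ((m.choose (n-i) * (m - (n-i)) : ℕ) : K) := by
        have := Nat.choose_succ_right_eq m (n-i)
        rw [show (n-i)+1 = n+1-i by omega] at this
        exact_mod_cast congrArg (Nat.cast : ℕ → K) this
      have hI2 : ((k.choose (i+1) * (i+1) : ℕ) : K)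
          = ((k.choose i * (k - i) : ℕ) : K) := by
        exact_mod_cast congrArg (Nat.cast : ℕ → K) (Nat.choose_succ_right_eq k i)
      have c1 : ((m - (n-i) : ℕ) : K) = (m : K) - (n : K) + (i : K) := by
        rw [Nat.cast_sub (by omega), Nat.cast_sub (by omega)]
        ring
      have c2 : ((k + (n+1-i) - i : ℕ) : K) = (k : K) + (n : K) + 1 - 2 * (i : K) := by
        rw [show k + (n+1-i) - i = k + n + 1 - 2*i by omega,
          Nat.cast_sub (by omega)]
        push_cast
        ring
      have c3 : ((k - i : ℕ) : K) = (k : K) - (i : K) := Nat.cast_sub (by omega)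
      have c4 : ((n+1-i : ℕ) : K) = (n : K) + 1 - (i : K) := by
        rw [Nat.cast_sub (by omega)]; push_cast; ring
      have c5 : ((m - (n+1-i) : ℕ) : K) = (m:K) - ((n:K) + 1 - (i:K)) := by
        rw [Nat.cast_sub (by omega), c4]
      push_cast [c1, c2, c3, c4, c5] at hI1 hI2 ⊢
      have hf1 : (((n+1).factorial : ℕ) : K) = ((n:K)+1) * ((n.factorial : ℕ) : K) := by
        rw [Nat.factorial_succ]; push_cast; ring
      have hf2 : (((n+2).factorial : ℕ) : K)
          = ((n:K)+2) * (((n:K)+1) * ((n.factorial : ℕ) : K)) := by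
        rw [show n+2 = (n+1)+1 from rfl, Nat.factorial_succ, Nat.factorial_succ]
        push_cast; ring
      simp only [hf1, hf2]
      linear_combination (((n:K)+1) * ((n.factorial : ℕ) : K)
          * ((m.choose (n+1-i) : ℕ) : K)) * hI2
        + (((n:K)+1) * ((n.factorial : ℕ) : K)
          * (((k.choose (i+1) : ℕ) : K) - ((k.choose i : ℕ) : K))) * hI1
    · -- i+1 > k : k ≤ i
      have hk' : k ≤ i := by omega
      -- T and B have choose k (i+1) = 0
      have hT : k.choose (i+1) = 0 := Nat.choose_eq_zero_of_lt (by omega)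
      rw [tT, tA, tB, tC, hT]
      by_cases hki : k = i
      · -- A = C case with k = i
        subst hki
        have e3 : k + (n-k) - k = n - k := by omega
        have e1 : k + (n+1-k) - k - 1 = n - k := by omega
        have f1 : m - (n+1-k) = m - (n-k) - 1 := by omega
        rw [e3, e1, f1]
        simp only [Nat.mul_zero, Nat.zero_mul, Nat.cast_zero, zero_smul, add_zero]
        rw [eq_comm, sub_eq_zero]
        congr 2
        have hx : k + (n+1-k) - k = (n-k) + 1 := by omega
        rw [hx]
        have h := Nat.choose_succ_right_eq m (n-k)
        have hmm : (n-k)+1 = n+1-k := by omega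
        rw [hmm] at h
        have : (n+1).factorial * k.choose k * m.choose (n+1-k) * ((n-k)+1)
            = (n+1).factorial * k.choose k * (m.choose (n+1-k) * ((n-k)+1)) := by ring
        rw [this, show m.choose (n+1-k) * ((n-k)+1)
            = m.choose (n+1-k) * (n+1-k) by rw [hmm], h, Nat.factorial_succ n]
        ring
      · -- k < i: everything vanishes
        have hk2 : k < i := by omega
        have hA : k.choose i = 0 := Nat.choose_eq_zero_of_lt hk2
        rw [hA]
        simp
  · -- m < n+1-i, i.e. m ≤ n-i : all four terms vanish
    have hT : m.choose (n+2-(i+1)) = 0 := by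
      apply Nat.choose_eq_zero_of_lt; omega
    have hA : m.choose (n+1-i) = 0 := Nat.choose_eq_zero_of_lt (by omega)
    have hB : m - (n+1-(i+1)) = 0 := by omega
    have hC : m - (n-i) = 0 := by omega
    rw [tT, tA, tB, tC, hT, hA, hB, hC]
    simp

lemma GG_rec (k m n : ℕ) :
    d1p K (GG K k m (n+1)) - ((n+1 : ℕ) : K) • d2p K (GG K k m n) = GG K k m (n+2) := by
  rw [expand_d1p_GG, expand_d2p_GG, GG_as_tT]
  rw [Finset.sum_range_succ' (fun j => tT K k m n j) (n+2)]
  rw [Finset.sum_range_succ (fun j => tT K k m n (j+1)) (n+1)]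
  rw [Finset.sum_congr rfl (fun i hi => key1 k m n i (by
    simpa using Finset.mem_range_succ_iff.mp hi))]
  rw [Finset.sum_sub_distrib, Finset.sum_add_distrib]
  rw [Finset.sum_add_distrib]
  rw [Finset.sum_range_succ (fun i => tA K k m n i) (n+1)]
  rw [Finset.sum_range_succ' (fun i => tB K k m n i) (n+1)]
  rw [key2, key3]
  abel



lemma TT_mk
    (hD1 : ∀ k m : ℕ, m ≤ a → k + m ≤ b →
      D1 (Ideal.Quotient.mk I (X 0 ^ k * X 1 ^ m)) =
        Ideal.Quotient.mk I (pderiv 0 (X 0 ^ k * X 1 ^ m) + X 0 * pderiv 1 (X 0 ^ k * X 1 ^ m)))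
    (hD2 : ∀ k m : ℕ, m ≤ a → k + m ≤ b →
      D2 (Ideal.Quotient.mk I (X 0 ^ k * X 1 ^ m)) =
        Ideal.Quotient.mk I (pderiv 1 (X 0 ^ k * X 1 ^ m)))
    {k m : ℕ} (h1 : m ≤ a) (h2 : k + m ≤ b) :
    ∀ n, TT D1 D2 n (Qmk K I (mu K k m)) = Qmk K I (GG K k m n) := by
  intro n
  induction n using Nat.twoStepInduction with
  | zero => rw [TT_zero, GG_zero]; rfl
  | one =>
    rw [TT_one, GG_one]
    exact D1_mk hD1 _ (mu_mem_V h1 h2)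
  | more n ih2 ih1 =>
    rw [TT_two, LinearMap.sub_apply, LinearMap.smul_apply, Module.End.mul_apply,
      Module.End.mul_apply, ih1, ih2,
      D1_mk hD1 _ (GG_mem_V h1 h2 (n+1)), D2_mk hD2 _ (GG_mem_V h1 h2 n),
      ← GG_rec k m n, map_sub, map_smul, Nat.cast_smul_eq_nsmul]


section Ops

variable (hD1 : ∀ k m : ℕ, m ≤ a → k + m ≤ b →
      D1 (Ideal.Quotient.mk I (X 0 ^ k * X 1 ^ m)) =
        Ideal.Quotient.mk I (pderiv 0 (X 0 ^ k * X 1 ^ m) + X 0 * pderiv 1 (X 0 ^ k * X 1 ^ m)))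
  (hD2 : ∀ k m : ℕ, m ≤ a → k + m ≤ b →
      D2 (Ideal.Quotient.mk I (X 0 ^ k * X 1 ^ m)) =
        Ideal.Quotient.mk I (pderiv 1 (X 0 ^ k * X 1 ^ m)))
  (hI : I = Ideal.span {p | ∃ k m : ℕ, (a < m ∨ b < k + m) ∧ p = X 0 ^ k * X 1 ^ m})

include hD2 in
lemma D2_pow_mu {k m : ℕ} (h1 : m ≤ a) (h2 : k + m ≤ b) (s : ℕ) :
    (D2 ^ s) (Qmk K I (mu K k m)) = ((m.descFactorial s : ℕ) : K) • Qmk K I (mu K k (m-s)) := by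
  induction s with
  | zero => simp
  | succ s ih =>
    rw [pow_succ', Module.End.mul_apply, ih, map_smul,
      D2_mk hD2 _ (mu_mem_V (by omega) (by omega)), d2p_mu, map_smul, smul_smul]
    rw [show m - s - 1 = m - (s+1) by omega]
    congr 1
    rw [Nat.descFactorial_succ]
    push_cast
    ring

include hD1 in
lemma D1_pow_mu0 {k : ℕ} (h2 : k ≤ b) (N : ℕ) :
    (D1 ^ N) (Qmk K I (mu K k 0)) = ((k.descFactorial N : ℕ) : K) • Qmk K I (mu K (k-N) 0) := by
  induction N with
  | zero => simp
  | succ N ih =>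
    rw [pow_succ', Module.End.mul_apply, ih, map_smul,
      D1_mk hD1 _ (mu_mem_V (by omega) (by omega)), d1p_mu, Nat.cast_zero, zero_smul,
      add_zero, map_smul, smul_smul]
    rw [show k - N - 1 = k - (N+1) by omega]
    congr 1
    rw [Nat.descFactorial_succ]
    push_cast
    ring

include hD2 hI in
lemma D2_pow_a_zero : D2 ^ (a+1) = 0 := by
  apply LinearMap.ext_on (span_q_top hI)
  rintro x ⟨k, m, h1, h2, rfl⟩
  rw [← Qmk_apply, D2_pow_mu hD2 h1 h2, LinearMap.zero_apply,
    Nat.descFactorial_eq_zero_iff_lt.mpr (by omega), Nat.cast_zero, zero_smul]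

include hD1 hD2 hI in
lemma TT_D2pow_zero (s : ℕ) (hs : s ≤ a) : TT D1 D2 (b+1-s) * D2 ^ s = 0 := by
  apply LinearMap.ext_on (span_q_top hI)
  rintro x ⟨k, m, h1, h2, rfl⟩
  rw [← Qmk_apply, Module.End.mul_apply, D2_pow_mu hD2 h1 h2, map_smul,
    TT_mk hD1 hD2 (show m - s ≤ a by omega) (show k + (m-s) ≤ b by omega),
    LinearMap.zero_apply]
  by_cases hsm : s ≤ m
  · rw [GG_eq_zero (show k + (m - s) < b+1-s by omega), map_zero, smul_zero]
  · rw [Nat.descFactorial_eq_zero_iff_lt.mpr (by omega), Nat.cast_zero, zero_smul]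

set_option maxHeartbeats 1600000 in
lemma TT_shape (hc : D1 * D2 = D2 * D1) :
    ∀ n, ∃ c : ℕ → K, c 0 = 1 ∧ (∀ i, n < 2*i → c i = 0) ∧
      TT D1 D2 n = ∑ i ∈ Finset.range (n+1), c i • (D1 ^ (n - 2*i) * D2 ^ i) := by
  intro n
  induction n using Nat.twoStepInduction with
  | zero =>
    refine ⟨fun i => if i = 0 then 1 else 0, rfl, fun i hi => if_neg (by omega), ?_⟩
    simp [TT_zero]
  | one =>
    refine ⟨fun i => if i = 0 then 1 else 0, rfl, fun i hi => if_neg (by omega), ?_⟩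
    rw [TT_one, Finset.sum_range_succ, Finset.sum_range_one]
    simp
  | more n ih0 ih1 =>
    obtain ⟨c0, hc00, hc0v, hc0e⟩ := ih0
    obtain ⟨c1, hc10, hc1v, hc1e⟩ := ih1
    refine ⟨fun i => if i = 0 then 1 else c1 i - ((n+1 : ℕ) : K) * c0 (i-1), rfl,
      fun i hi => ?_, ?_⟩
    · show (if i = 0 then (1:K) else c1 i - ((n+1 : ℕ) : K) * c0 (i-1)) = 0
      rw [if_neg (by omega), hc1v i (by omega), hc0v (i-1) (by omega)]
      ring
    · rw [TT_two, ← Nat.cast_smul_eq_nsmul K, hc1e, hc0e, Finset.mul_sum, Finset.mul_sum,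
        Finset.smul_sum]
      have hD1part : ∀ i ∈ Finset.range (n+2),
          D1 * (c1 i • (D1 ^ (n+1-2*i) * D2 ^ i)) = c1 i • (D1 ^ (n+2-2*i) * D2 ^ i) := by
        intro i _
        rw [mul_smul_comm]
        by_cases h2i : 2*i ≤ n+1
        · congr 1
          rw [← mul_assoc, ← pow_succ']
          congr 2
          omega
        · rw [hc1v i (by omega), zero_smul, zero_smul]
      have hD2part : ∀ i ∈ Finset.range (n+1),
          ((n+1 : ℕ) : K) • (D2 * (c0 i • (D1 ^ (n-2*i) * D2 ^ i)))
            = (((n+1 : ℕ) : K) * c0 i) • (D1 ^ (n+2-2*(i+1)) * D2 ^ (i+1)) := by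
        intro i _
        have hcm : D2 * D1 ^ (n-2*i) = D1 ^ (n-2*i) * D2 :=
          (Commute.pow_right hc.symm _).eq
        rw [mul_smul_comm, ← mul_assoc, hcm, mul_assoc, ← pow_succ']
        rw [show n+2-2*(i+1) = n - 2*i by omega, smul_smul]
      rw [Finset.sum_congr rfl hD1part, Finset.sum_congr rfl hD2part]
      rw [Finset.sum_range_succ' (fun i => c1 i • (D1 ^ (n+2-2*i) * D2 ^ i)) (n+1)]
      have eB : (∑ j ∈ Finset.range (n+2+1),
            (if j = 0 then (1:K) else c1 j - ((n+1 : ℕ) : K) * c0 (j-1)) •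
              (D1 ^ (n+2-2*j) * D2 ^ j))
          = c1 0 • (D1 ^ (n+2-2*0) * D2 ^ 0)
            + ∑ i ∈ Finset.range (n+1), (c1 (i+1) - ((n+1 : ℕ) : K) * c0 i) •
              (D1 ^ (n+2-2*(i+1)) * D2 ^ (i+1)) := by
        rw [Finset.sum_range_succ'
          (fun j => (if j = 0 then (1:K) else c1 j - ((n+1 : ℕ) : K) * c0 (j-1)) •
            (D1 ^ (n+2-2*j) * D2 ^ j)) (n+2)]
        rw [Finset.sum_range_succ
          (fun i => (if i+1 = 0 then (1:K) else c1 (i+1) - ((n+1 : ℕ) : K) * c0 (i+1-1)) •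
            (D1 ^ (n+2-2*(i+1)) * D2 ^ (i+1))) (n+1)]
        have hlast : (if n+1+1 = 0 then (1:K)
              else c1 (n+1+1) - ((n+1 : ℕ) : K) * c0 (n+1+1-1)) •
            (D1 ^ (n+2-2*(n+1+1)) * D2 ^ (n+1+1)) = 0 := by
          rw [if_neg (by omega), hc1v (n+1+1) (by omega), hc0v (n+1+1-1) (by omega)]
          simp
        rw [hlast, add_zero]
        have hindiv : ∀ i ∈ Finset.range (n+1),
            (if i+1 = 0 then (1:K) else c1 (i+1) - ((n+1 : ℕ) : K) * c0 (i+1-1)) •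
              (D1 ^ (n+2-2*(i+1)) * D2 ^ (i+1))
            = (c1 (i+1) - ((n+1 : ℕ) : K) * c0 i) • (D1 ^ (n+2-2*(i+1)) * D2 ^ (i+1)) :=
          fun i _ => by rw [if_neg (Nat.succ_ne_zero i), Nat.add_sub_cancel]
        rw [Finset.sum_congr rfl hindiv, if_pos rfl, ← hc10]
        abel
      rw [eB]
      have hsplit : ∀ i ∈ Finset.range (n+1),
          (c1 (i+1) - ((n+1 : ℕ) : K) * c0 i) • (D1 ^ (n+2-2*(i+1)) * D2 ^ (i+1))
          = c1 (i+1) • (D1 ^ (n+2-2*(i+1)) * D2 ^ (i+1))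
            - (((n+1 : ℕ) : K) * c0 i) • (D1 ^ (n+2-2*(i+1)) * D2 ^ (i+1)) :=
        fun i _ => LinearMap.ext fun x => by
            simp only [LinearMap.smul_apply, LinearMap.sub_apply, sub_smul]
      rw [Finset.sum_congr rfl hsplit, Finset.sum_sub_distrib]
      abel

end Ops


section Main

variable (hI : I = Ideal.span {p | ∃ k m : ℕ, (a < m ∨ b < k + m) ∧ p = X 0 ^ k * X 1 ^ m})
  (hD1 : ∀ k m : ℕ, m ≤ a → k + m ≤ b →
      D1 (Ideal.Quotient.mk I (X 0 ^ k * X 1 ^ m)) =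
        Ideal.Quotient.mk I (pderiv 0 (X 0 ^ k * X 1 ^ m) + X 0 * pderiv 1 (X 0 ^ k * X 1 ^ m)))
  (hD2 : ∀ k m : ℕ, m ≤ a → k + m ≤ b →
      D2 (Ideal.Quotient.mk I (X 0 ^ k * X 1 ^ m)) =
        Ideal.Quotient.mk I (pderiv 1 (X 0 ^ k * X 1 ^ m)))

set_option maxHeartbeats 2000000 in
include hI hD1 hD2 in
lemma E_mem_span {l : ℕ} (hl : l ≤ a) (hb : 2*a ≤ b) :
    ∀ d : ℕ, ∀ s : ℕ, s ≤ a → a ≤ s + d →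
      D1 ^ (a + b - l - 2*s) * D2 ^ s ∈ Submodule.span K
        (Set.range fun t : Set.Icc (a-l) a => D1 ^ (a + b - l - 2*(t:ℕ)) * D2 ^ (t:ℕ)) := by
  intro d
  induction d with
  | zero =>
    intro s hs has
    have hsa : s = a := by omega
    subst hsa
    exact Submodule.subset_span ⟨⟨s, Set.mem_Icc.mpr ⟨by omega, le_rfl⟩⟩, rfl⟩
  | succ d ih =>
    intro s hs has
    by_cases hd : a ≤ s + d
    · exact ih s hs hd
    by_cases hgen : a - l ≤ s
    · exact Submodule.subset_span ⟨⟨s, Set.mem_Icc.mpr ⟨hgen, hs⟩⟩, rfl⟩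
    have hsl : s + l + 1 ≤ a := by omega
    obtain ⟨c, hc0, hcv, hce⟩ := TT_shape (D_comm hI hD1 hD2) (b+1-s)
    have hzero : D1 ^ (a-l-s-1) * (TT D1 D2 (b+1-s) * D2 ^ s) = 0 := by
      rw [TT_D2pow_zero hD1 hD2 hI s hs, mul_zero]
    rw [hce, Finset.sum_mul, Finset.mul_sum] at hzero
    have hterm : ∀ i ∈ Finset.range (b+1-s+1),
        D1 ^ (a-l-s-1) * ((c i • (D1 ^ (b+1-s - 2*i) * D2 ^ i)) * D2 ^ s)
          = c i • (D1 ^ ((a-l-s-1) + (b+1-s-2*i)) * D2 ^ (i+s)) := by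
      intro i _
      rw [smul_mul_assoc, mul_smul_comm]
      congr 1
      rw [mul_assoc, ← pow_add, ← mul_assoc, ← pow_add]
    rw [Finset.sum_congr rfl hterm] at hzero
    rw [Finset.sum_range_succ'
      (fun i => c i • (D1 ^ ((a-l-s-1) + (b+1-s-2*i)) * D2 ^ (i+s))) (b+1-s)] at hzero
    rw [hc0, one_smul] at hzero
    have hE0 : D1 ^ ((a-l-s-1) + (b+1-s-2*0)) * D2 ^ (0+s)
        = D1 ^ (a + b - l - 2*s) * D2 ^ s := by
      congr 2
      · omega
      · omega
    rw [hE0] at hzero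
    have hEeq : D1 ^ (a + b - l - 2*s) * D2 ^ s
        = - ∑ i ∈ Finset.range (b+1-s),
            c (i+1) • (D1 ^ ((a-l-s-1) + (b+1-s-2*(i+1))) * D2 ^ ((i+1)+s)) := by
      rw [eq_neg_iff_add_eq_zero, add_comm]
      exact hzero
    rw [hEeq]
    apply Submodule.neg_mem
    apply Submodule.sum_mem
    intro i _
    by_cases h2 : 2*(i+1) ≤ b+1-s
    · by_cases hia : (i+1) + s ≤ a
      · have hexp : (a-l-s-1) + (b+1-s-2*(i+1)) = a + b - l - 2*(s+(i+1)) := by omega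
        have hexp2 : (i+1)+s = s+(i+1) := by omega
        rw [hexp, hexp2]
        exact Submodule.smul_mem _ _ (ih (s+(i+1)) (by omega) (by omega))
      · have hsplit : (i+1)+s = (a+1) + ((i+1)+s-(a+1)) := by omega
        rw [hsplit, pow_add D2 (a+1) ((i+1)+s-(a+1)), D2_pow_a_zero hD2 hI, zero_mul, mul_zero, smul_zero]
        exact Submodule.zero_mem _
    · rw [hcv (i+1) (by omega), zero_smul]
      exact Submodule.zero_mem _

set_option maxHeartbeats 2000000 in
include hI hD1 hD2 in
lemma E_indep {l : ℕ} (hl : l ≤ a) (hb : 2*a ≤ b) :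
    LinearIndependent K
      (fun s : Set.Icc (a-l) a => D1 ^ (a + b - l - 2*(s:ℕ)) * D2 ^ (s:ℕ)) := by
  rw [linearIndependent_iff']
  intro t g hsum
  suffices H : ∀ N : ℕ, ∀ i ∈ t, (i : ℕ) ≤ N → g i = 0 by
    intro i hi; exact H (i:ℕ) i hi le_rfl
  intro N
  induction N using Nat.strong_induction_on with
  | _ N ihN =>
  intro i hi hiN
  obtain ⟨hi1, hi2⟩ := Set.mem_Icc.mp i.2
  have h1 : (i:ℕ) ≤ a := hi2
  have h2 : (b - (i:ℕ)) + (i:ℕ) ≤ b := by omega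
  have happ := congrArg
    (fun (E : Module.End K (MvPolynomial (Fin 2) K ⧸ I)) =>
      E (Qmk K I (mu K (b - (i:ℕ)) (i:ℕ)))) hsum
  simp only [LinearMap.coe_sum, Finset.sum_apply, LinearMap.smul_apply,
    LinearMap.zero_apply] at happ
  have hsingle : ∀ j ∈ t, j ≠ i →
      g j • ((D1 ^ (a + b - l - 2*(j:ℕ)) * D2 ^ (j:ℕ))
        (Qmk K I (mu K (b - (i:ℕ)) (i:ℕ)))) = 0 := by
    intro j hj hji
    rcases lt_trichotomy (j:ℕ) (i:ℕ) with hlt | heq | hgt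
    · rw [ihN (j:ℕ) (by omega) j hj le_rfl, zero_smul]
    · exact absurd (Subtype.ext heq) hji
    · rw [Module.End.mul_apply, D2_pow_mu hD2 h1 h2,
        Nat.descFactorial_eq_zero_iff_lt.mpr hgt, Nat.cast_zero, zero_smul,
        map_zero, smul_zero]
  rw [Finset.sum_eq_single i hsingle (fun h => absurd hi h)] at happ
  rw [Module.End.mul_apply, D2_pow_mu hD2 h1 h2, map_smul,
    show (i:ℕ) - (i:ℕ) = 0 by omega,
    D1_pow_mu0 hD1 (show b - (i:ℕ) ≤ b by omega) _] at happ
  rw [smul_smul, smul_smul] at happ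
  have hq : Qmk K I (mu K ((b - (i:ℕ)) - (a + b - l - 2*(i:ℕ))) 0) ≠ 0 :=
    mk_mu_ne_zero hI (by omega) (by omega)
  have hc1 : (((i:ℕ).descFactorial (i:ℕ) : ℕ) : K) ≠ 0 := by
    rw [Nat.cast_ne_zero]
    intro hzero
    rw [Nat.descFactorial_eq_zero_iff_lt] at hzero
    omega
  have hc2 : (((b - (i:ℕ)).descFactorial (a + b - l - 2*(i:ℕ)) : ℕ) : K) ≠ 0 := by
    rw [Nat.cast_ne_zero]
    intro hzero
    rw [Nat.descFactorial_eq_zero_iff_lt] at hzero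
    omega
  by_contra hgi
  have hne : g i * (((i:ℕ).descFactorial (i:ℕ) : ℕ) : K)
      * (((b - (i:ℕ)).descFactorial (a + b - l - 2*(i:ℕ)) : ℕ) : K) ≠ 0 :=
    mul_ne_zero (mul_ne_zero hgi hc1) hc2
  apply hq
  calc Qmk K I (mu K ((b - (i:ℕ)) - (a + b - l - 2*(i:ℕ))) 0)
      = (g i * (((i:ℕ).descFactorial (i:ℕ) : ℕ) : K)
          * (((b - (i:ℕ)).descFactorial (a + b - l - 2*(i:ℕ)) : ℕ) : K))⁻¹
        • ((g i * (((i:ℕ).descFactorial (i:ℕ) : ℕ) : K)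
          * (((b - (i:ℕ)).descFactorial (a + b - l - 2*(i:ℕ)) : ℕ) : K))
          • Qmk K I (mu K ((b - (i:ℕ)) - (a + b - l - 2*(i:ℕ))) 0)) := by
        rw [smul_smul, inv_mul_cancel₀ hne, one_smul]
    _ = 0 := by rw [happ, smul_zero]

end Main

end

end Stmt11

open MvPolynomial in
/-- On `A_{a,b}` with `b ≥ 2a`, for each `0 ≤ l ≤ a` the span of `{δ_1^{a+b−l−2s} δ_2^s : 0 ≤ s ≤ a}`
has dimension exactly `l+1`, with basis given by the operators for `a−l ≤ s ≤ a`. -/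
theorem stmt_11 (K : Type*) [Field K] [CharZero K] (a b : ℕ) (ha : 1 ≤ a) (hb : 2 * a ≤ b)
    (I : Ideal (MvPolynomial (Fin 2) K))
    (hI : I = Ideal.span {p | ∃ k m : ℕ, (a < m ∨ b < k + m) ∧ p = X 0 ^ k * X 1 ^ m})
    (D1 D2 : Module.End K (MvPolynomial (Fin 2) K ⧸ I))
    (hD1 : ∀ k m : ℕ, m ≤ a → k + m ≤ b →
      D1 (Ideal.Quotient.mk I (X 0 ^ k * X 1 ^ m)) =
        Ideal.Quotient.mk I (pderiv 0 (X 0 ^ k * X 1 ^ m) + X 0 * pderiv 1 (X 0 ^ k * X 1 ^ m)))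
    (hD2 : ∀ k m : ℕ, m ≤ a → k + m ≤ b →
      D2 (Ideal.Quotient.mk I (X 0 ^ k * X 1 ^ m)) =
        Ideal.Quotient.mk I (pderiv 1 (X 0 ^ k * X 1 ^ m))) :
    ∀ l ≤ a,
      Module.finrank K (Submodule.span K
          {E : Module.End K (MvPolynomial (Fin 2) K ⧸ I) |
            ∃ s ≤ a, E = D1 ^ (a + b - l - 2 * s) * D2 ^ s}) = l + 1 ∧
      LinearIndependent K
        (fun s : Set.Icc (a - l) a => D1 ^ (a + b - l - 2 * (s : ℕ)) * D2 ^ (s : ℕ)) ∧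
      Submodule.span K
          (Set.range fun s : Set.Icc (a - l) a => D1 ^ (a + b - l - 2 * (s : ℕ)) * D2 ^ (s : ℕ))
        = Submodule.span K
          {E : Module.End K (MvPolynomial (Fin 2) K ⧸ I) |
            ∃ s ≤ a, E = D1 ^ (a + b - l - 2 * s) * D2 ^ s} := by
  intro l hl
  have hspan_eq : Submodule.span K
        (Set.range fun s : Set.Icc (a - l) a => D1 ^ (a + b - l - 2 * (s : ℕ)) * D2 ^ (s : ℕ))
      = Submodule.span K
        {E : Module.End K (MvPolynomial (Fin 2) K ⧸ I) |
          ∃ s ≤ a, E = D1 ^ (a + b - l - 2 * s) * D2 ^ s} := by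
    apply le_antisymm
    · rw [Submodule.span_le]
      rintro _ ⟨t, rfl⟩
      exact Submodule.subset_span ⟨(t : ℕ), (Set.mem_Icc.mp t.2).2, rfl⟩
    · rw [Submodule.span_le]
      rintro E ⟨s, hs, rfl⟩
      exact Stmt11.E_mem_span hI hD1 hD2 hl hb a s hs (by omega)
  have hindep := Stmt11.E_indep hI hD1 hD2 hl hb
  refine ⟨?_, hindep, hspan_eq⟩
  rw [← hspan_eq, finrank_span_eq_card hindep, Fintype.card_Icc, Nat.card_Icc]
  omega
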